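/- Let (Y^ε) be a uniformly integrable family of random variables, let (A_ε) be events, and let c_ε > 0 be constants satisfying: for each ε, c_ε · P[A_ε] ≤ E[|Y^ε| ; |Y^ε| ≥ c_ε]. Then the family Ŷ^ε := Y^ε 1_{A_ε^c} + c_ε 1_{A_ε} is also uniformly integrable. -/
import Mathlib


open MeasureTheory Filter Real

/-- If `(Y^ε)` is uniformly integrable, `(A_ε)` are events and `c_ε > 0` satisfy
`c_ε · P[A_ε] ≤ E[|Y^ε|; |Y^ε| ≥ c_ε]`, then `Ŷ^ε := Y^ε 1_{A_ε^c} + c_ε 1_{A_ε}` is also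
uniformly integrable. -/
theorem stmt1 {Ω : Type*} [MeasurableSpace Ω] (μ : Measure Ω) [IsProbabilityMeasure μ]
    (Y : ℝ → Ω → ℝ) (hmeas : ∀ ε, Measurable (Y ε)) (hint : ∀ ε, Integrable (Y ε) μ)
    (hUI : ∀ δ > (0 : ℝ), ∃ K : ℝ, ∀ ε > (0 : ℝ),
      ∫ ω in {ω | K ≤ |Y ε ω|}, |Y ε ω| ∂μ ≤ δ)
    (A : ℝ → Set Ω) (hA : ∀ ε, MeasurableSet (A ε))
    (c : ℝ → ℝ) (hc : ∀ ε > (0 : ℝ), 0 < c ε)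
    (hkey : ∀ ε > (0 : ℝ),
      c ε * (μ (A ε)).toReal ≤ ∫ ω in {ω | c ε ≤ |Y ε ω|}, |Y ε ω| ∂μ)
    (Yhat : ℝ → Ω → ℝ)
    (hYhat : ∀ ε ω, Yhat ε ω = Y ε ω * (A ε)ᶜ.indicator (fun _ => (1 : ℝ)) ω
        + c ε * (A ε).indicator (fun _ => (1 : ℝ)) ω) :
    ∀ δ > (0 : ℝ), ∃ K : ℝ, ∀ ε > (0 : ℝ),
      ∫ ω in {ω | K ≤ |Yhat ε ω|}, |Yhat ε ω| ∂μ ≤ δ := by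

  intro δ hδ
  obtain ⟨K, hK⟩ := hUI (δ / 2) (by linarith)
  refine ⟨K, fun ε hε => ?_⟩
  have hceq : ∀ ω, Yhat ε ω = (A ε)ᶜ.indicator (Y ε) ω + (A ε).indicator (fun _ => c ε) ω := by
    intro ω
    rw [hYhat ε ω]
    by_cases h : ω ∈ A ε <;>
      simp [Set.indicator_apply, h]
  have hOnA : ∀ ω ∈ A ε, Yhat ε ω = c ε := by
    intro ω hω
    rw [hceq ω]
    simp [Set.indicator_apply, hω]
  have hOnAc : ∀ ω ∈ (A ε)ᶜ, Yhat ε ω = Y ε ω := by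
    intro ω hω
    have h' : ω ∉ A ε := hω
    rw [hceq ω]
    simp [Set.indicator_apply, h']
  have hYm : Measurable (Yhat ε) := by
    have : Yhat ε = fun ω => (A ε)ᶜ.indicator (Y ε) ω + (A ε).indicator (fun _ => c ε) ω :=
      funext hceq
    rw [this]
    exact ((hmeas ε).indicator (hA ε).compl).add (measurable_const.indicator (hA ε))
  have hYint : Integrable (Yhat ε) μ := by
    have : Yhat ε = fun ω => (A ε)ᶜ.indicator (Y ε) ω + (A ε).indicator (fun _ => c ε) ω :=
      funext hceq
    rw [this]
    exact ((hint ε).indicator (hA ε).compl).add ((integrable_const _).indicator (hA ε))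
  set S := {ω | K ≤ |Yhat ε ω|} with hSdef
  have hSm : MeasurableSet S := measurableSet_le measurable_const hYm.abs
  have hsplit : ∫ ω in S, |Yhat ε ω| ∂μ
      = ∫ ω in S ∩ A ε, |Yhat ε ω| ∂μ + ∫ ω in S ∩ (A ε)ᶜ, |Yhat ε ω| ∂μ := by
    rw [← setIntegral_union
      (Disjoint.mono Set.inter_subset_right Set.inter_subset_right disjoint_compl_right)
      (hSm.inter (hA ε).compl) (hYint.abs.integrableOn) (hYint.abs.integrableOn),
      Set.inter_union_compl]
  have hKbound : ∫ ω in {ω | K ≤ |Y ε ω|}, |Y ε ω| ∂μ ≤ δ / 2 := hK ε hε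
  -- bound on Aᶜ part
  have hAc : ∫ ω in S ∩ (A ε)ᶜ, |Yhat ε ω| ∂μ ≤ δ / 2 := by
    have heq : ∫ ω in S ∩ (A ε)ᶜ, |Yhat ε ω| ∂μ = ∫ ω in S ∩ (A ε)ᶜ, |Y ε ω| ∂μ := by
      refine setIntegral_congr_fun (hSm.inter (hA ε).compl) (fun ω hω => ?_)
      rw [hOnAc ω hω.2]
    rw [heq]
    refine le_trans (setIntegral_mono_set ((hint ε).abs.integrableOn)
      (Filter.Eventually.of_forall (fun ω => abs_nonneg _))
      (HasSubset.Subset.eventuallyLE ?_)) hKbound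
    intro ω hω
    have := hω.1
    simp only [hSdef, Set.mem_setOf_eq] at this ⊢
    rwa [hOnAc ω hω.2] at this
  -- bound on A part
  have hAb : ∫ ω in S ∩ A ε, |Yhat ε ω| ∂μ ≤ δ / 2 := by
    by_cases hcK : K ≤ c ε
    · have heq : ∫ ω in S ∩ A ε, |Yhat ε ω| ∂μ = ∫ _ω in S ∩ A ε, c ε ∂μ := by
        refine setIntegral_congr_fun (hSm.inter (hA ε)) (fun ω hω => ?_)
        rw [hOnA ω hω.2, abs_of_pos (hc ε hε)]
      rw [heq, setIntegral_const, smul_eq_mul]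
      have h1 : (μ (S ∩ A ε)).toReal * c ε ≤ c ε * (μ (A ε)).toReal := by
        rw [mul_comm]
        refine mul_le_mul_of_nonneg_left ?_ (le_of_lt (hc ε hε))
        exact ENNReal.toReal_mono (measure_ne_top μ _) (measure_mono Set.inter_subset_right)
      refine le_trans h1 (le_trans (hkey ε hε) ?_)
      refine le_trans (setIntegral_mono_set ((hint ε).abs.integrableOn)
        (Filter.Eventually.of_forall (fun ω => abs_nonneg _))
        (HasSubset.Subset.eventuallyLE ?_)) hKbound
      intro ω hω
      simp only [Set.mem_setOf_eq] at hω ⊢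
      linarith
    · have hempty : S ∩ A ε = ∅ := by
        ext ω
        simp only [Set.mem_inter_iff, Set.mem_empty_iff_false, iff_false, not_and]
        intro hS hA'
        have : K ≤ |Yhat ε ω| := hS
        rw [hOnA ω hA', abs_of_pos (hc ε hε)] at this
        linarith
      rw [hempty]
      simp
      linarith
  calc ∫ ω in S, |Yhat ε ω| ∂μ
      = ∫ ω in S ∩ A ε, |Yhat ε ω| ∂μ + ∫ ω in S ∩ (A ε)ᶜ, |Yhat ε ω| ∂μ := hsplit
    _ ≤ δ / 2 + δ / 2 := add_le_add hAb hAc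
    _ = δ := by ring
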